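/- Λ = (W_j, Λ_j, v_j) is a gf-Riesz basis for H with bounds A, B if and only if the induced sequence {u_{j,k} : j ∈ J, k ∈ K_j} is a Riesz basis for H with bounds A, B, i.e. its closed linear span is H and A Σ |c_{j,k}|² ≤ ‖Σ c_{j,k} u_{j,k}‖² ≤ B Σ |c_{j,k}|² for every finitely supported family of scalars (c_{j,k}). -/

import Mathlib

open scoped InnerProductSpace
open ContinuousLinearMap

/-- The orthogonal projection of `H` onto the closed subspace `W j`, as a map `H →L[ℂ] H`. -/
noncomputable def gfProj {H : Type*} [NormedAddCommGroup H] [InnerProductSpace ℂ H]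
    {J : Type*} (W : J → Submodule ℂ H) [∀ j, CompleteSpace (W j)] (j : J) : H →L[ℂ] H :=
  (W j).subtypeL.comp ((W j).orthogonalProjectionOnto)

lemma orthonormal_norm_sq_sum {E : Type*} [NormedAddCommGroup E] [InnerProductSpace ℂ E]
    {ι : Type*} {w : ι → E} (hw : Orthonormal ℂ w) (l : ι → ℂ) (s : Finset ι) :
    ‖∑ i ∈ s, l i • w i‖ ^ 2 = ∑ i ∈ s, ‖l i‖ ^ 2 := by
  have h := hw.inner_sum l l s
  have h2 : RCLike.re (⟪∑ i ∈ s, l i • w i, ∑ i ∈ s, l i • w i⟫_ℂ)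
      = ‖∑ i ∈ s, l i • w i‖ ^ 2 := inner_self_eq_norm_sq _
  rw [h] at h2
  rw [← h2, map_sum]
  refine Finset.sum_congr rfl fun i _ => ?_
  simp [Complex.sq_norm, Complex.normSq_apply, Complex.mul_conj']

section Aux

variable {H : Type*} [NormedAddCommGroup H] [InnerProductSpace ℂ H] [CompleteSpace H]
    {J : Type*}
    {Hs : J → Type*} [∀ j, NormedAddCommGroup (Hs j)] [∀ j, InnerProductSpace ℂ (Hs j)]
    [∀ j, CompleteSpace (Hs j)]
    (W : J → Submodule ℂ H) [∀ j, CompleteSpace (W j)]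
    (v : J → ℝ)
    (Λ : ∀ j, H →L[ℂ] Hs j)
    {K : J → Type*}
    (e : ∀ j, HilbertBasis (K j) ℂ (Hs j))
    (u : ∀ j, K j → H)
    (hu : ∀ j k, u j k = v j • gfProj W j (adjoint (Λ j) (e j k)))

include hu in
lemma sum_sigma_eq (s : Finset J) (t : ∀ j, Finset (K j)) (c : ∀ j, K j → ℂ) :
    ∑ p ∈ s.sigma t, c p.1 p.2 • u p.1 p.2
      = ∑ j ∈ s, v j • gfProj W j (adjoint (Λ j) (∑ k ∈ t j, c j k • e j k)) := by
  rw [Finset.sum_sigma]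
  refine Finset.sum_congr rfl fun j _ => ?_
  rw [map_sum, map_sum, Finset.smul_sum]
  refine Finset.sum_congr rfl fun k _ => ?_
  rw [hu j k, map_smul, map_smul, smul_comm]

omit [∀ j, CompleteSpace (Hs j)] in
lemma sum_sigma_norm_eq (s : Finset J) (t : ∀ j, Finset (K j)) (c : ∀ j, K j → ℂ) :
    ∑ p ∈ s.sigma t, ‖c p.1 p.2‖ ^ 2
      = ∑ j ∈ s, ‖∑ k ∈ t j, c j k • e j k‖ ^ 2 := by
  rw [Finset.sum_sigma]
  exact Finset.sum_congr rfl fun j _ =>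
    (orthonormal_norm_sq_sum (e j).orthonormal (c j) (t j)).symm

include hu in
lemma closure_span_eq (hv : ∀ j, 0 < v j) :
    (Submodule.span ℂ
      (⋃ j, Set.range fun g : Hs j => gfProj W j (adjoint (Λ j) g))).topologicalClosure
    = (Submodule.span ℂ (Set.range fun p : Σ j, K j => u p.1 p.2)).topologicalClosure := by
  have hvC : ∀ j, (v j : ℂ) ≠ 0 := fun j => by
    exact_mod_cast Complex.ofReal_ne_zero.mpr (hv j).ne'
  apply le_antisymm
  · refine Submodule.topologicalClosure_minimal _ ?_
      (Submodule.isClosed_topologicalClosure _)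
    rw [Submodule.span_le]
    rintro x hx
    simp only [Set.mem_iUnion, Set.mem_range] at hx
    obtain ⟨j, g, rfl⟩ := hx
    set M := (Submodule.span ℂ (Set.range fun p : Σ j, K j => u p.1 p.2)).topologicalClosure
    set f : Hs j →L[ℂ] H := (v j : ℂ) • ((gfProj W j).comp (adjoint (Λ j))) with hf
    set N : Submodule ℂ (Hs j) := M.comap (f : Hs j →ₗ[ℂ] H) with hN
    have hNclosed : IsClosed (N : Set (Hs j)) :=
      (Submodule.isClosed_topologicalClosure _).preimage f.continuous
    have hrange : ∀ k, e j k ∈ N := by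
      intro k
      have : f (e j k) = u j k := by
        rw [hf, hu j k]
        simp [Complex.coe_smul]
      show f (e j k) ∈ M
      rw [this]
      exact Submodule.le_topologicalClosure _
        (Submodule.subset_span ⟨⟨j, k⟩, rfl⟩)
    have hspan : Submodule.span ℂ (Set.range (e j)) ≤ N :=
      Submodule.span_le.mpr (Set.range_subset_iff.mpr hrange)
    have htop : (⊤ : Submodule ℂ (Hs j)) ≤ N := by
      rw [← (e j).dense_span]
      exact Submodule.topologicalClosure_minimal _ hspan hNclosed
    have hg : f g ∈ M := htop Submodule.mem_top
    have : gfProj W j (adjoint (Λ j) g) = (v j : ℂ)⁻¹ • f g := by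
      rw [hf]
      simp only [ContinuousLinearMap.smul_apply, ContinuousLinearMap.comp_apply,
        smul_smul, inv_mul_cancel₀ (hvC j), one_smul]
    rw [this]
    exact M.smul_mem _ hg
  · refine Submodule.topologicalClosure_minimal _ ?_
      (Submodule.isClosed_topologicalClosure _)
    rw [Submodule.span_le]
    rintro x ⟨p, rfl⟩
    refine Submodule.le_topologicalClosure _ ?_
    show u p.1 p.2 ∈ _
    rw [hu p.1 p.2, ← Complex.coe_smul]
    refine Submodule.smul_mem _ _ (Submodule.subset_span ?_)
    exact Set.mem_iUnion.mpr ⟨p.1, ⟨e p.1 p.2, rfl⟩⟩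

end Aux

/-- `Λ = (W_j, Λ_j, v_j)` is a gf-Riesz basis for `H` with bounds `A, B` iff
the induced sequence `{u_{j,k}}` is a Riesz basis for `H` with bounds `A, B`. -/
theorem gf_riesz_basis_iff_induced_riesz_basis
    {H : Type*} [NormedAddCommGroup H] [InnerProductSpace ℂ H] [CompleteSpace H]
    {J : Type*} [Countable J]
    {Hs : J → Type*} [∀ j, NormedAddCommGroup (Hs j)] [∀ j, InnerProductSpace ℂ (Hs j)]
    [∀ j, CompleteSpace (Hs j)]
    (W : J → Submodule ℂ H) [∀ j, CompleteSpace (W j)]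
    (v : J → ℝ) (hv : ∀ j, 0 < v j)
    (Λ : ∀ j, H →L[ℂ] Hs j)
    (K : J → Type*) [∀ j, Countable (K j)]
    (e : ∀ j, HilbertBasis (K j) ℂ (Hs j))
    (u : ∀ j, K j → H)
    (hu : ∀ j k, u j k = v j • gfProj W j (adjoint (Λ j) (e j k)))
    (A B : ℝ) (hA : 0 < A) (hAB : A ≤ B) :
    ((Submodule.span ℂ
        (⋃ j, Set.range fun g : Hs j => gfProj W j (adjoint (Λ j) g))).topologicalClosure
        = ⊤ ∧
     ∀ (s : Finset J) (g : ∀ j, Hs j),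
        A * ∑ j ∈ s, ‖g j‖ ^ 2 ≤ ‖∑ j ∈ s, v j • gfProj W j (adjoint (Λ j) (g j))‖ ^ 2 ∧
        ‖∑ j ∈ s, v j • gfProj W j (adjoint (Λ j) (g j))‖ ^ 2 ≤ B * ∑ j ∈ s, ‖g j‖ ^ 2)
      ↔
    ((Submodule.span ℂ (Set.range fun p : Σ j, K j => u p.1 p.2)).topologicalClosure = ⊤ ∧
     ∀ (s : Finset (Σ j, K j)) (c : (Σ j, K j) → ℂ),
        A * ∑ p ∈ s, ‖c p‖ ^ 2 ≤ ‖∑ p ∈ s, c p • u p.1 p.2‖ ^ 2 ∧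
        ‖∑ p ∈ s, c p • u p.1 p.2‖ ^ 2 ≤ B * ∑ p ∈ s, ‖c p‖ ^ 2) := by
  classical
  constructor
  · rintro ⟨hc, hineq⟩
    refine ⟨by rw [← closure_span_eq W v Λ e u hu hv]; exact hc, ?_⟩
    intro s c
    set sJ := s.image Sigma.fst with hsJ
    set t : ∀ j, Finset (K j) :=
      fun j => s.preimage (Sigma.mk j) sigma_mk_injective.injOn with ht
    have hs : sJ.sigma t = s := s.sigma_image_fst_preimage_mk
    set g : ∀ j, Hs j := fun j => ∑ k ∈ t j, c ⟨j, k⟩ • e j k with hg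
    have eq1 : ∑ p ∈ s, c p • u p.1 p.2
        = ∑ j ∈ sJ, v j • gfProj W j (adjoint (Λ j) (g j)) := by
      rw [← hs]
      exact sum_sigma_eq W v Λ e u hu sJ t (fun j k => c ⟨j, k⟩)
    have eq2 : ∑ p ∈ s, ‖c p‖ ^ 2 = ∑ j ∈ sJ, ‖g j‖ ^ 2 := by
      rw [← hs]
      exact sum_sigma_norm_eq e sJ t (fun j k => c ⟨j, k⟩)
    rw [eq1, eq2]
    exact hineq sJ g
  · rintro ⟨hc, hineq⟩
    refine ⟨by rw [closure_span_eq W v Λ e u hu hv]; exact hc, ?_⟩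
    intro s g
    have hdense : ∀ j, g j ∈
        closure ((Submodule.span ℂ (Set.range (e j)) : Submodule ℂ (Hs j)) : Set (Hs j)) := by
      intro j
      have h2 : closure ((Submodule.span ℂ (Set.range (e j)) : Submodule ℂ (Hs j))
          : Set (Hs j)) = Set.univ := by
        rw [← Submodule.topologicalClosure_coe, (e j).dense_span, Submodule.top_coe]
      rw [h2]; trivial
    choose y hy1 hy2 using fun j => mem_closure_iff_seq_limit.mp (hdense j)
    choose cf hcf using fun j n =>
      Finsupp.mem_span_range_iff_exists_finsupp.mp (hy1 j n)
    have hyrep : ∀ j n, y j n = ∑ k ∈ (cf j n).support, cf j n k • e j k :=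
      fun j n => (hcf j n).symm
    have key : ∀ n : ℕ,
        A * ∑ j ∈ s, ‖y j n‖ ^ 2 ≤
          ‖∑ j ∈ s, v j • gfProj W j (adjoint (Λ j) (y j n))‖ ^ 2 ∧
        ‖∑ j ∈ s, v j • gfProj W j (adjoint (Λ j) (y j n))‖ ^ 2 ≤
          B * ∑ j ∈ s, ‖y j n‖ ^ 2 := by
      intro n
      have h := hineq (s.sigma fun j => (cf j n).support) (fun p => cf p.1 n p.2)
      rw [sum_sigma_eq W v Λ e u hu s (fun j => (cf j n).support) (fun j k => cf j n k),
        sum_sigma_norm_eq e s (fun j => (cf j n).support) (fun j k => cf j n k)] at h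
      simp only [← hyrep] at h
      exact h
    have lim1 : Filter.Tendsto (fun n => ∑ j ∈ s, ‖y j n‖ ^ 2)
        Filter.atTop (nhds (∑ j ∈ s, ‖g j‖ ^ 2)) :=
      tendsto_finset_sum _ fun j _ => (hy2 j).norm.pow 2
    have lim2 : Filter.Tendsto
        (fun n => ‖∑ j ∈ s, v j • gfProj W j (adjoint (Λ j) (y j n))‖ ^ 2)
        Filter.atTop
        (nhds (‖∑ j ∈ s, v j • gfProj W j (adjoint (Λ j) (g j))‖ ^ 2)) := by
      refine Filter.Tendsto.pow ?_ 2 |>.congr (fun n => rfl)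
      exact (tendsto_finset_sum _ fun j _ =>
        ((((gfProj W j).comp (adjoint (Λ j))).continuous.tendsto (g j)).comp
          (hy2 j)).const_smul (v j)).norm
    constructor
    · exact le_of_tendsto_of_tendsto' (lim1.const_mul A) lim2 fun n => (key n).1
    · exact le_of_tendsto_of_tendsto' lim2 (lim1.const_mul B) fun n => (key n).2
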